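/- Let P be a nonsymmetric operad with multiplication π and let δ_π(f) := −[π, f]_GV be the induced differential. Then for f ∈ P_m, g ∈ P_n, the cup bracket satisfies [f,g]_π = ι_f(δ_π g) + (-1)^{m-1} ι_{δ_π f} g + (-1)^m δ_π(ι_f g). Consequently, the induced cup product on the cohomology H_P^•(π) is graded commutative. -/

import Mathlib

/-- A nonsymmetric operad (in "arity minus one" indexing: `Q n` is the space of
operations of arity `n + 1`, i.e. the space `P_{n+1}` of the paper), given by a
collection of `k`-modules with partial compositions
`∘ᵢ : P_{m+1} × P_{n+1} → P_{m+n+1}` (here `i : Fin (m+1)` is the 0-based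
position), satisfying the sequential and parallel associativity axioms and
unit axioms.  The target degree is a free variable `p` constrained by
`m + n = p`, which avoids dependent-type casts in the axioms. -/
structure NSOperad (k : Type*) [Field k] (Q : ℕ → Type*)
    [∀ n, AddCommGroup (Q n)] [∀ n, Module k (Q n)] where
  comp : ∀ {m n p : ℕ}, m + n = p → Q m → Fin (m + 1) → Q n → Q p
  comp_add_left : ∀ {m n p : ℕ} (h : m + n = p) (f f' : Q m) (i : Fin (m + 1)) (g : Q n),
    comp h (f + f') i g = comp h f i g + comp h f' i g
  comp_add_right : ∀ {m n p : ℕ} (h : m + n = p) (f : Q m) (i : Fin (m + 1)) (g g' : Q n),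
    comp h f i (g + g') = comp h f i g + comp h f i g'
  comp_smul_left : ∀ {m n p : ℕ} (h : m + n = p) (a : k) (f : Q m) (i : Fin (m + 1)) (g : Q n),
    comp h (a • f) i g = a • comp h f i g
  comp_smul_right : ∀ {m n p : ℕ} (h : m + n = p) (a : k) (f : Q m) (i : Fin (m + 1)) (g : Q n),
    comp h f i (a • g) = a • comp h f i g
  one : Q 0
  comp_one : ∀ {m : ℕ} (f : Q m) (i : Fin (m + 1)), comp (Nat.add_zero m) f i one = f
  one_comp : ∀ {m : ℕ} (f : Q m), comp (Nat.zero_add m) one 0 f = f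
  assoc_seq : ∀ {m n l q r p : ℕ} (h0 : n + l = q) (h1 : m + q = p) (h2 : m + n = r)
    (h3 : r + l = p) (f : Q m) (g : Q n) (hh : Q l) (i : Fin (m + 1)) (j : Fin (n + 1)),
    comp h1 f i (comp h0 g j hh) =
      comp h3 (comp h2 f i g) ⟨(i : ℕ) + (j : ℕ), by have := i.isLt; have := j.isLt; omega⟩ hh
  assoc_par : ∀ {m n l r s p : ℕ} (h2 : m + n = r) (h3 : r + l = p) (h4 : m + l = s)
    (h5 : s + n = p) (f : Q m) (g : Q n) (hh : Q l) (i j : Fin (m + 1)), (i : ℕ) < (j : ℕ) →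
    comp h3 (comp h2 f i g) ⟨(j : ℕ) + n, by have := j.isLt; omega⟩ hh =
      comp h5 (comp h4 f j hh) ⟨(i : ℕ), by have := i.isLt; omega⟩ g

namespace NSOperad

variable {k : Type*} [Field k] {Q : ℕ → Type*}
  [∀ n, AddCommGroup (Q n)] [∀ n, Module k (Q n)]

/-- Transport along an equality of degrees. -/
def tr {i j : ℕ} (h : i = j) (x : Q i) : Q j := h ▸ x

variable (O : NSOperad k Q)

/-- The contraction operator `ι_g f := Σᵢ (-1)^{(i-1)(n-1)} f ∘ᵢ g`
(for `f ∈ P_{m+1}`, `g ∈ P_{n+1}` in paper degrees). -/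
def iota {m n : ℕ} (g : Q n) (f : Q m) : Q (m + n) :=
  ∑ i : Fin (m + 1), ((-1 : k) ^ ((i : ℕ) * n)) • O.comp rfl f i g

/-- `π ∈ P_2` is a multiplication if `π ∘₁ π = π ∘₂ π`. -/
def IsMult (π : Q 1) : Prop := O.comp rfl π 0 π = O.comp rfl π 1 π

/-- The Gerstenhaber–Voronov bracket `[f,g]_GV = ι_f g − (-1)^{mn} ι_g f`. -/
def gv {m n : ℕ} (f : Q m) (g : Q n) : Q (m + n) :=
  tr (by omega : n + m = m + n) (O.iota f g) - ((-1 : k) ^ (m * n)) • O.iota g f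

/-- The differential `δ_π f := −[π, f]_GV`. -/
def delta (π : Q 1) {n : ℕ} (f : Q n) : Q (n + 1) :=
  - tr (by omega : 1 + n = n + 1) (O.gv π f)

/-- The map `θ f := −ι_f π`. -/
def theta (π : Q 1) {n : ℕ} (f : Q n) : Q (n + 1) :=
  - tr (by omega : 1 + n = n + 1) (O.iota f π)

/-- The map `D f := −ι_π f`. -/
def Dop (π : Q 1) {n : ℕ} (f : Q n) : Q (n + 1) := - O.iota π f

/-- The cup product `f ∪_π g := (π ∘₂ g) ∘₁ f`. -/
def cup (π : Q 1) {m n : ℕ} (f : Q m) (g : Q n) : Q (m + n + 1) :=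
  O.comp (by omega : (1 + n) + m = m + n + 1) (O.comp rfl π 1 g) 0 f

/-- The cup bracket `[f,g]_π := f ∪_π g − (-1)^{(m+1)(n+1)} g ∪_π f`
(paper degrees `m+1`, `n+1`). -/
def cupBracket (π : Q 1) {m n : ℕ} (f : Q m) (g : Q n) : Q (m + n + 1) :=
  O.cup π f g - ((-1 : k) ^ ((m + 1) * (n + 1))) •
    tr (by omega : n + m + 1 = m + n + 1) (O.cup π g f)

/-- The Frölicher–Nijenhuis bracket
`[f,g]_FN := [f,g]_π + (-1)^{m+1} ι_{δ_π f} g − (-1)^{(m+2)(n+1)} ι_{δ_π g} f`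
(paper degrees `m+1`, `n+1`). -/
def fn (π : Q 1) {m n : ℕ} (f : Q m) (g : Q n) : Q (m + n + 1) :=
  O.cupBracket π f g
    + ((-1 : k) ^ (m + 1)) •
        tr (by omega : n + (m + 1) = m + n + 1) (O.iota (O.delta π f) g)
    - ((-1 : k) ^ ((m + 2) * (n + 1))) •
        tr (by omega : m + (n + 1) = m + n + 1) (O.iota (O.delta π g) f)

/-- The derived bracket
`[f,g]_D := [f,g]_π + ι_{θ f} g − (-1)^{(m+1)(n+1)} ι_{θ g} f`. -/
def derived (π : Q 1) {m n : ℕ} (f : Q m) (g : Q n) : Q (m + n + 1) :=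
  O.cupBracket π f g
    + tr (by omega : n + (m + 1) = m + n + 1) (O.iota (O.theta π f) g)
    - ((-1 : k) ^ ((m + 1) * (n + 1))) •
        tr (by omega : m + (n + 1) = m + n + 1) (O.iota (O.theta π g) f)

/-- The deformed element `π_S := π ∘₁ S + π ∘₂ S − S ∘₁ π` for `S ∈ P_1`. -/
def piDef (π : Q 1) (S : Q 0) : Q 1 :=
  O.comp rfl π 0 S + O.comp rfl π 1 S - O.comp rfl S 0 π

/-- `S ∈ P_1` is a Nijenhuis element for the multiplication `π`:
`(π ∘₂ S) ∘₁ S = S ∘₁ (π ∘₁ S + π ∘₂ S − S ∘₁ π)`. -/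
def IsNijenhuisFor (π : Q 1) (S : Q 0) : Prop :=
  O.comp rfl (O.comp rfl π 1 S) 0 S = O.comp rfl S 0 (O.piDef π S)

/-- Powers `N^j := N ∘₁ N^{j-1}`, `N^0 = 𝟙`. -/
def Npow (N : Q 0) : ℕ → Q 0
  | 0 => O.one
  | (j + 1) => O.comp (rfl : (0 : ℕ) + 0 = 0) N 0 (Npow N j)

/-- `R ∈ P_1` is a Rota–Baxter element of weight `lam`:
`(π ∘₂ R) ∘₁ R = R ∘₁ (π ∘₁ R + π ∘₂ R + lam π)`. -/
def IsRB (π : Q 1) (lam : k) (R : Q 0) : Prop :=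
  O.comp rfl (O.comp rfl π 1 R) 0 R =
    O.comp rfl R 0 (O.comp rfl π 0 R + O.comp rfl π 1 R + lam • π)

/-- `r ∈ P_1` is an averaging element:
`(π ∘₂ r) ∘₁ r = r ∘₁ (π ∘₁ r) = r ∘₁ (π ∘₂ r)`. -/
def IsAvg (π : Q 1) (r : Q 0) : Prop :=
  O.comp rfl (O.comp rfl π 1 r) 0 r = O.comp rfl r 0 (O.comp rfl π 0 r) ∧
  O.comp rfl (O.comp rfl π 1 r) 0 r = O.comp rfl r 0 (O.comp rfl π 1 r)

end NSOperad

namespace NSOperad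

section GerstenhaberAux

variable {k : Type*} [Field k] {Q : ℕ → Type*}
  [∀ n, AddCommGroup (Q n)] [∀ n, Module k (Q n)]

lemma sgn_congr {a b : ℕ} (h : a % 2 = b % 2) : ((-1 : k) ^ a) = (-1 : k) ^ b := by
  conv_lhs => rw [← Nat.div_add_mod a 2]
  conv_rhs => rw [← Nat.div_add_mod b 2]
  rw [pow_add, pow_add, pow_mul, pow_mul, h]
  norm_num

lemma sgn_smul_congr {a b : ℕ} {p : ℕ} (h : a % 2 = b % 2) (x : Q p) :
    ((-1 : k) ^ a) • x = ((-1 : k) ^ b) • x := by rw [sgn_congr h]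

lemma neg_sgn_smul {a p : ℕ} (x : Q p) : -(((-1 : k) ^ a) • x) = ((-1 : k) ^ (a + 1)) • x := by
  rw [pow_succ, mul_smul, neg_one_smul, smul_neg]

lemma tr_trivial {i : ℕ} (h : i = i) (x : Q i) : tr h x = x := rfl

lemma tr_add {i j : ℕ} (h : i = j) (x y : Q i) : tr h (x + y) = tr h x + tr h y := by
  subst h; rfl

lemma tr_smul {i j : ℕ} (h : i = j) (a : k) (x : Q i) : tr h (a • x) = a • tr h x := by
  subst h; rfl

lemma tr_neg {i j : ℕ} (h : i = j) (x : Q i) : tr h (-x) = - tr h x := by subst h; rfl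

lemma tr_sub {i j : ℕ} (h : i = j) (x y : Q i) : tr h (x - y) = tr h x - tr h y := by
  subst h; rfl

lemma tr_zero {i j : ℕ} (h : i = j) : tr h (0 : Q i) = 0 := by subst h; rfl

lemma tr_sum {ι : Type*} (s : Finset ι) {i j : ℕ} (h : i = j) (F : ι → Q i) :
    tr h (∑ x ∈ s, F x) = ∑ x ∈ s, tr h (F x) := by subst h; rfl

lemma tr_tr {i j l : ℕ} (h : i = j) (h' : j = l) (x : Q i) :
    tr h' (tr h x) = tr (h.trans h') x := by subst h; rfl

variable (O : NSOperad k Q)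

lemma tr_comp {a b p p' : ℕ} (H : a + b = p) (h : p = p') (x : Q a) (i : Fin (a + 1))
    (y : Q b) : tr h (O.comp H x i y) = O.comp (H.trans h) x i y := by subst h; rfl

/-- `f ↦ f ∘ᵢ g` as a linear map. -/
def compL {m n p : ℕ} (h : m + n = p) (i : Fin (m + 1)) (g : Q n) : Q m →ₗ[k] Q p where
  toFun f := O.comp h f i g
  map_add' x y := O.comp_add_left h x y i g
  map_smul' a x := O.comp_smul_left h a x i g

/-- `g ↦ f ∘ᵢ g` as a linear map. -/
def compR {m n p : ℕ} (h : m + n = p) (f : Q m) (i : Fin (m + 1)) : Q n →ₗ[k] Q p where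
  toFun g := O.comp h f i g
  map_add' x y := O.comp_add_right h f i x y
  map_smul' a x := O.comp_smul_right h a f i x

lemma comp_sum_left {ι : Type*} (s : Finset ι) {m n p : ℕ} (h : m + n = p) (F : ι → Q m)
    (i : Fin (m + 1)) (g : Q n) :
    O.comp h (∑ x ∈ s, F x) i g = ∑ x ∈ s, O.comp h (F x) i g :=
  map_sum (O.compL h i g) F s

lemma comp_sum_right {ι : Type*} (s : Finset ι) {m n p : ℕ} (h : m + n = p) (f : Q m)
    (i : Fin (m + 1)) (G : ι → Q n) :
    O.comp h f i (∑ x ∈ s, G x) = ∑ x ∈ s, O.comp h f i (G x) :=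
  map_sum (O.compR h f i) G s

lemma comp_zero_left {m n p : ℕ} (h : m + n = p) (i : Fin (m + 1)) (g : Q n) :
    O.comp h (0 : Q m) i g = 0 := map_zero (O.compL h i g)

lemma comp_zero_right {m n p : ℕ} (h : m + n = p) (f : Q m) (i : Fin (m + 1)) :
    O.comp h f i (0 : Q n) = 0 := map_zero (O.compR h f i)

lemma comp_sub_left {m n p : ℕ} (h : m + n = p) (x y : Q m) (i : Fin (m + 1)) (g : Q n) :
    O.comp h (x - y) i g = O.comp h x i g - O.comp h y i g := map_sub (O.compL h i g) x y

lemma comp_sub_right {m n p : ℕ} (h : m + n = p) (f : Q m) (i : Fin (m + 1)) (x y : Q n) :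
    O.comp h f i (x - y) = O.comp h f i x - O.comp h f i y := map_sub (O.compR h f i) x y

/-- Expansion of the differential into its three families of terms. -/
lemma delta_expand (π : Q 1) {n : ℕ} (x : Q n) :
    O.delta π x =
      ((-1 : k) ^ n) • O.comp (show 1 + n = n + 1 by omega) π 0 x
        + O.comp (show 1 + n = n + 1 by omega) π 1 x
        - ∑ j : Fin (n + 1), ((-1 : k) ^ (j : ℕ)) • O.comp rfl x j π := by
  unfold delta gv iota
  rw [Fin.sum_univ_two]
  simp only [tr_sub, tr_tr, tr_smul, tr_add, tr_sum, tr_comp, tr_trivial, Fin.val_zero,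
    Fin.val_one, Fin.isValue, zero_mul, one_mul, mul_one, pow_zero, one_smul]
  rw [smul_add, smul_smul, ← pow_add, sgn_congr (a := n + n) (b := 0) (by omega), pow_zero,
    one_smul]
  abel

variable (π : Q 1) {m n : ℕ} (f : Q m) (g : Q n)

/-- `(g ∘ⱼ f) ∘ₗ π`. -/
def EE (j : Fin (n + 1)) (l : Fin (n + m + 1)) : Q (m + n + 1) :=
  O.comp (show n + m + 1 = m + n + 1 by omega) (O.comp rfl g j f) l π

/-- `π ∘₀ (g ∘ⱼ f)`. -/
def PP0 (j : Fin (n + 1)) : Q (m + n + 1) :=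
  O.comp (show 1 + (n + m) = m + n + 1 by omega) π 0 (O.comp rfl g j f)

/-- `π ∘₁ (g ∘ⱼ f)`. -/
def PP1 (j : Fin (n + 1)) : Q (m + n + 1) :=
  O.comp (show 1 + (n + m) = m + n + 1 by omega) π 1 (O.comp rfl g j f)

/-- `g ∘ⱼ (π ∘₀ f)`. -/
def BB0 (j : Fin (n + 1)) : Q (m + n + 1) :=
  O.comp (show n + (m + 1) = m + n + 1 by omega) g j
    (O.comp (show 1 + m = m + 1 by omega) π 0 f)

/-- `g ∘ⱼ (π ∘₁ f)`. -/
def BB1 (j : Fin (n + 1)) : Q (m + n + 1) :=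
  O.comp (show n + (m + 1) = m + n + 1 by omega) g j
    (O.comp (show 1 + m = m + 1 by omega) π 1 f)

/-- `(π ∘₁ g) ∘₀ f = f ∪ g`. -/
def KK : Q (m + n + 1) :=
  O.comp (show n + 1 + m = m + n + 1 by rw [Nat.add_right_comm n 1 m, Nat.add_comm n m])
    (O.comp (show 1 + n = n + 1 by omega) π 1 g) 0 f

/-- `(π ∘₁ f) ∘₀ g = g ∪ f`. -/
def KK' : Q (m + n + 1) :=
  O.comp (show m + 1 + n = m + n + 1 by omega)
    (O.comp (show 1 + m = m + 1 by omega) π 1 f) 0 g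

lemma L1 :
    tr (show n + 1 + m = m + n + 1 by rw [Nat.add_right_comm n 1 m, Nat.add_comm n m]) (O.iota f (O.delta π g)) =
      KK O π f g + ((-1 : k) ^ (n * m + m + n)) • KK' O π f g
        + (∑ j : Fin (n + 1), ((-1 : k) ^ ((j : ℕ) * m + n)) • PP0 O π f g j)
        + (∑ j : Fin (n + 1), ((-1 : k) ^ ((j : ℕ) * m + m)) • PP1 O π f g j)
        - (∑ j : Fin (n + 1), ((-1 : k) ^ ((j : ℕ) * m + (j : ℕ))) • BB0 O π f g j)
        - (∑ j : Fin (n + 1), ((-1 : k) ^ ((j : ℕ) * m + m + (j : ℕ))) • BB1 O π f g j)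
        - (∑ x ∈ Finset.univ.filter
              (fun x : Fin (n + 1) × Fin (n + m + 1) => ((x.2 : ℕ) < (x.1 : ℕ))),
            ((-1 : k) ^ (m + (x.1 : ℕ) * m + (x.2 : ℕ))) • EE O π f g x.1 x.2)
        - (∑ x ∈ Finset.univ.filter
              (fun x : Fin (n + 1) × Fin (n + m + 1) => ((x.1 : ℕ) + m < (x.2 : ℕ))),
            ((-1 : k) ^ (m + (x.1 : ℕ) * m + (x.2 : ℕ))) • EE O π f g x.1 x.2) := by
  rw [delta_expand]
  unfold iota
  simp only [O.comp_sub_left, O.comp_add_left, O.comp_smul_left, O.comp_sum_left,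
    tr_sub, tr_add, tr_smul, tr_sum, tr_comp, smul_sub, smul_add, Finset.smul_sum,
    smul_smul, ← pow_add]
  have hSa : (∑ x : Fin (n + 1 + 1), ((-1 : k) ^ ((x : ℕ) * m + n)) •
        O.comp (show n + 1 + m = m + n + 1 by rw [Nat.add_right_comm n 1 m, Nat.add_comm n m])
          (O.comp (show 1 + n = n + 1 by omega) π 0 g) x f)
      = (∑ j : Fin (n + 1), ((-1 : k) ^ ((j : ℕ) * m + n)) • PP0 O π f g j)
        + ((-1 : k) ^ (n * m + m + n)) • KK' O π f g := by
    rw [Fin.sum_univ_castSucc]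
    congr 1
    · refine Finset.sum_congr rfl fun j _ => ?_
      have hseq := O.assoc_seq rfl (show 1 + (n + m) = m + n + 1 by omega)
        (show 1 + n = n + 1 by omega) (show n + 1 + m = m + n + 1 by rw [Nat.add_right_comm n 1 m, Nat.add_comm n m]) π g f 0 j
      have hidx : (⟨((0 : Fin 2) : ℕ) + (j : ℕ), by have := j.isLt; omega⟩ : Fin (n + 1 + 1))
          = j.castSucc := by ext; simp
      rw [hidx] at hseq
      rw [← hseq]
      unfold PP0
      apply sgn_smul_congr
      simp only [Fin.coe_castSucc]
    · have hpar := O.assoc_par (show 1 + n = n + 1 by omega)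
        (show n + 1 + m = m + n + 1 by rw [Nat.add_right_comm n 1 m, Nat.add_comm n m]) (show 1 + m = m + 1 by omega)
        (show m + 1 + n = m + n + 1 by omega) π g f 0 1 (by norm_num)
      have hidx : (⟨((1 : Fin 2) : ℕ) + n, by omega⟩ : Fin (n + 1 + 1)) = Fin.last (n + 1) := by
        ext; simp [Nat.add_comm]
      rw [hidx] at hpar
      rw [hpar]
      unfold KK'
      apply sgn_smul_congr
      simp only [Fin.val_last, add_mul, one_mul]
  have hSb : (∑ x : Fin (n + 1 + 1), ((-1 : k) ^ ((x : ℕ) * m)) •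
        O.comp (show n + 1 + m = m + n + 1 by rw [Nat.add_right_comm n 1 m, Nat.add_comm n m])
          (O.comp (show 1 + n = n + 1 by omega) π 1 g) x f)
      = KK O π f g + ∑ j : Fin (n + 1), ((-1 : k) ^ ((j : ℕ) * m + m)) • PP1 O π f g j := by
    rw [Fin.sum_univ_succ]
    congr 1
    · unfold KK
      simp
    · refine Finset.sum_congr rfl fun j _ => ?_
      have hseq := O.assoc_seq rfl (show 1 + (n + m) = m + n + 1 by omega)
        (show 1 + n = n + 1 by omega) (show n + 1 + m = m + n + 1 by rw [Nat.add_right_comm n 1 m, Nat.add_comm n m]) π g f 1 j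
      have hidx : (⟨((1 : Fin 2) : ℕ) + (j : ℕ), by have := j.isLt; omega⟩ : Fin (n + 1 + 1))
          = j.succ := by ext; simp [Nat.add_comm]
      rw [hidx] at hseq
      rw [← hseq]
      unfold PP1
      apply sgn_smul_congr
      simp only [Fin.val_succ, add_mul, one_mul]
  have hSc : (∑ x : Fin (n + 1 + 1), ∑ y : Fin (n + 1), ((-1 : k) ^ ((x : ℕ) * m + (y : ℕ))) •
        O.comp (show n + 1 + m = m + n + 1 by rw [Nat.add_right_comm n 1 m, Nat.add_comm n m]) (O.comp rfl g y π) x f)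
      = (∑ j : Fin (n + 1), ((-1 : k) ^ ((j : ℕ) * m + (j : ℕ))) • BB0 O π f g j)
        + ((∑ j : Fin (n + 1), ((-1 : k) ^ ((j : ℕ) * m + m + (j : ℕ))) • BB1 O π f g j)
        + ((∑ x ∈ Finset.univ.filter
              (fun x : Fin (n + 1) × Fin (n + m + 1) => ((x.1 : ℕ) + m < (x.2 : ℕ))),
            ((-1 : k) ^ (m + (x.1 : ℕ) * m + (x.2 : ℕ))) • EE O π f g x.1 x.2)
        + (∑ x ∈ Finset.univ.filter
              (fun x : Fin (n + 1) × Fin (n + m + 1) => ((x.2 : ℕ) < (x.1 : ℕ))),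
            ((-1 : k) ^ (m + (x.1 : ℕ) * m + (x.2 : ℕ))) • EE O π f g x.1 x.2))) := by
    rw [← Finset.sum_product', Finset.univ_product_univ]
    rw [← Finset.sum_filter_add_sum_filter_not Finset.univ
      (fun x : Fin (n + 1 + 1) × Fin (n + 1) => (x.1 : ℕ) = (x.2 : ℕ))]
    rw [← Finset.sum_filter_add_sum_filter_not
      (Finset.univ.filter (fun x : Fin (n + 1 + 1) × Fin (n + 1) => ¬((x.1 : ℕ) = (x.2 : ℕ))))
      (fun x => (x.1 : ℕ) = (x.2 : ℕ) + 1)]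
    rw [← Finset.sum_filter_add_sum_filter_not
      (((Finset.univ.filter
          (fun x : Fin (n + 1 + 1) × Fin (n + 1) => ¬((x.1 : ℕ) = (x.2 : ℕ)))).filter
          (fun x => ¬((x.1 : ℕ) = (x.2 : ℕ) + 1))))
      (fun x => (x.1 : ℕ) < (x.2 : ℕ))]
    congr 1
    · -- diagonal: BB0
      refine Finset.sum_nbij' (fun x => x.2)
        (fun j => (⟨(j : ℕ), by have := j.isLt; omega⟩, j)) ?_ ?_ ?_ ?_ ?_
      · intro x _; exact Finset.mem_univ _
      · intro j _; simp
      · intro x hx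
        simp only [Finset.mem_filter, Finset.mem_univ, true_and] at hx
        ext <;> simp [← hx]
      · intro j _; rfl
      · intro x hx
        simp only [Finset.mem_filter, Finset.mem_univ, true_and] at hx
        have hseq := O.assoc_seq (show 1 + m = m + 1 by omega)
          (show n + (m + 1) = m + n + 1 by omega) rfl
          (show n + 1 + m = m + n + 1 by rw [Nat.add_right_comm n 1 m, Nat.add_comm n m]) g π f x.2 0
        have hidx : (⟨(x.2 : ℕ) + ((0 : Fin 2) : ℕ), by have := x.2.isLt; omega⟩ :
            Fin (n + 1 + 1)) = x.1 := by ext; simp [hx]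
        rw [hidx] at hseq
        unfold BB0
        rw [hseq]
        apply sgn_smul_congr
        rw [hx]
    congr 1
    · -- superdiagonal: BB1
      refine Finset.sum_nbij' (fun x => x.2)
        (fun j => (⟨(j : ℕ) + 1, by have := j.isLt; omega⟩, j)) ?_ ?_ ?_ ?_ ?_
      · intro x _; exact Finset.mem_univ _
      · intro j _; simp
      · intro x hx
        simp only [Finset.mem_filter, Finset.mem_univ, true_and] at hx
        ext <;> simp [hx.2]
      · intro j _; rfl
      · intro x hx
        simp only [Finset.mem_filter, Finset.mem_univ, true_and] at hx
        have hseq := O.assoc_seq (show 1 + m = m + 1 by omega)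
          (show n + (m + 1) = m + n + 1 by omega) rfl
          (show n + 1 + m = m + n + 1 by rw [Nat.add_right_comm n 1 m, Nat.add_comm n m]) g π f x.2 1
        have hidx : (⟨(x.2 : ℕ) + ((1 : Fin 2) : ℕ), by have := x.2.isLt; omega⟩ :
            Fin (n + 1 + 1)) = x.1 := by ext; simp [hx.2]
        rw [hidx] at hseq
        unfold BB1
        rw [hseq]
        apply sgn_smul_congr
        rw [hx.2]
        simp only [Fin.val_mk, Fin.val_one, add_mul, one_mul]
        try (generalize (x.2 : ℕ) * m = a; omega)
    congr 1
    · -- below diagonal: x.1 < x.2, maps to E x.1 (x.2 + m)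
      refine Finset.sum_nbij'
        (fun x : Fin (n + 1 + 1) × Fin (n + 1) =>
          ((⟨min (x.1 : ℕ) n, by omega⟩, ⟨(x.2 : ℕ) + m, by have := x.2.isLt; omega⟩) :
            Fin (n + 1) × Fin (n + m + 1)))
        (fun y : Fin (n + 1) × Fin (n + m + 1) =>
          ((⟨(y.1 : ℕ), by have := y.1.isLt; omega⟩, ⟨min ((y.2 : ℕ) - m) n, by omega⟩) :
            Fin (n + 1 + 1) × Fin (n + 1)))
        ?_ ?_ ?_ ?_ ?_
      · intro x hx
        simp only [Finset.mem_filter, Finset.mem_univ, true_and] at hx ⊢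
        have := x.2.isLt; omega
      · intro y hy
        simp only [Finset.mem_filter, Finset.mem_univ, true_and] at hy ⊢
        have := y.1.isLt; have := y.2.isLt; omega
      · intro x hx
        simp only [Finset.mem_filter, Finset.mem_univ, true_and] at hx
        have := x.2.isLt
        ext <;> simp <;> omega
      · intro y hy
        simp only [Finset.mem_filter, Finset.mem_univ, true_and] at hy
        have := y.1.isLt; have := y.2.isLt
        ext <;> simp <;> omega
      · intro x hx
        simp only [Finset.mem_filter, Finset.mem_univ, true_and] at hx
        have hx2 := x.2.isLt
        have hpar := O.assoc_par rfl (show n + m + 1 = m + n + 1 by omega) rfl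
          (show n + 1 + m = m + n + 1 by rw [Nat.add_right_comm n 1 m, Nat.add_comm n m]) g f π
          (⟨min (x.1 : ℕ) n, by omega⟩ : Fin (n + 1)) x.2 (by simp; omega)
        have hidx : (⟨((⟨min (x.1 : ℕ) n, by omega⟩ : Fin (n + 1)) : ℕ), by omega⟩ :
            Fin (n + 1 + 1)) = x.1 := by ext; simp; omega
        rw [hidx] at hpar
        unfold EE
        dsimp only
        rw [← hpar]
        apply sgn_smul_congr
        try simp only [Fin.val_mk]
        have hmin : min (x.1 : ℕ) n = (x.1 : ℕ) := by omega
        rw [hmin]; generalize (x.1 : ℕ) * m = a; omega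
    · -- above superdiagonal: x.2 + 1 < x.1, maps to E (x.1 - 1) x.2
      refine Finset.sum_nbij'
        (fun x : Fin (n + 1 + 1) × Fin (n + 1) =>
          ((⟨(x.1 : ℕ) - 1, by have := x.1.isLt; omega⟩,
            ⟨(x.2 : ℕ), by have := x.2.isLt; omega⟩) : Fin (n + 1) × Fin (n + m + 1)))
        (fun y : Fin (n + 1) × Fin (n + m + 1) =>
          ((⟨(y.1 : ℕ) + 1, by have := y.1.isLt; omega⟩,
            ⟨min (y.2 : ℕ) n, by omega⟩) : Fin (n + 1 + 1) × Fin (n + 1)))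
        ?_ ?_ ?_ ?_ ?_
      · intro x hx
        simp only [Finset.mem_filter, Finset.mem_univ, true_and] at hx ⊢
        omega
      · intro y hy
        simp only [Finset.mem_filter, Finset.mem_univ, true_and] at hy ⊢
        have := y.1.isLt; omega
      · intro x hx
        simp only [Finset.mem_filter, Finset.mem_univ, true_and] at hx
        have := x.2.isLt
        ext <;> simp <;> omega
      · intro y hy
        simp only [Finset.mem_filter, Finset.mem_univ, true_and] at hy
        have := y.1.isLt
        ext <;> simp <;> omega
      · intro x hx
        simp only [Finset.mem_filter, Finset.mem_univ, true_and] at hx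
        have hx1 := x.1.isLt
        have hpar := O.assoc_par rfl (show n + 1 + m = m + n + 1 by rw [Nat.add_right_comm n 1 m, Nat.add_comm n m]) rfl
          (show n + m + 1 = m + n + 1 by omega) g π f x.2
          (⟨(x.1 : ℕ) - 1, by have := x.1.isLt; omega⟩ : Fin (n + 1)) (by simp; omega)
        have hidx : (⟨((⟨(x.1 : ℕ) - 1, by have := x.1.isLt; omega⟩ : Fin (n + 1)) : ℕ) + 1,
            by omega⟩ : Fin (n + 1 + 1)) = x.1 := by ext; simp; omega
        rw [hidx] at hpar
        unfold EE
        dsimp only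
        rw [hpar]
        apply sgn_smul_congr
        try simp only [Fin.val_mk]
        obtain ⟨i', hi'⟩ : ∃ i', (x.1 : ℕ) = i' + 1 := ⟨(x.1 : ℕ) - 1, by omega⟩
        rw [hi']
        simp only [Nat.add_sub_cancel, add_mul, one_mul]
        generalize i' * m = a; omega
  rw [Finset.sum_sub_distrib, Finset.sum_add_distrib, hSa, hSb, hSc]
  abel

lemma L2 :
    ((-1 : k) ^ m) • tr (show n + (m + 1) = m + n + 1 by omega)
        (O.iota (O.delta π f) g) =
      (∑ j : Fin (n + 1), ((-1 : k) ^ ((j : ℕ) * m + (j : ℕ))) • BB0 O π f g j)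
        + (∑ j : Fin (n + 1), ((-1 : k) ^ ((j : ℕ) * m + m + (j : ℕ))) • BB1 O π f g j)
        - (∑ x ∈ Finset.univ.filter
              (fun x : Fin (n + 1) × Fin (n + m + 1) =>
                ((x.1 : ℕ) ≤ (x.2 : ℕ) ∧ (x.2 : ℕ) ≤ (x.1 : ℕ) + m)),
            ((-1 : k) ^ (m + (x.1 : ℕ) * m + (x.2 : ℕ))) • EE O π f g x.1 x.2) := by
  rw [delta_expand]
  unfold iota BB0 BB1 EE
  have ha : ∀ (j : Fin (n + 1)) (i : Fin (m + 1)),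
      O.comp (rfl : n + (m + 1) = n + (m + 1)) g j (O.comp rfl f i π)
        = O.comp (show n + m + 1 = n + (m + 1) by omega) (O.comp rfl g j f)
            ⟨(j : ℕ) + (i : ℕ), by have := j.isLt; have := i.isLt; omega⟩ π :=
    fun j i => O.assoc_seq rfl _ rfl _ g f π j i
  simp only [O.comp_sub_right, O.comp_add_right, O.comp_smul_right, O.comp_sum_right, ha,
    tr_sub, tr_add, tr_smul, tr_sum, tr_comp, smul_sub, smul_add, Finset.smul_sum,
    smul_smul, ← pow_add]
  rw [Finset.sum_sub_distrib, Finset.sum_add_distrib]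
  congr 1
  · congr 1
    · refine Finset.sum_congr rfl fun j _ => ?_
      apply sgn_smul_congr
      have hj : (j : ℕ) * (m + 1) = (j : ℕ) * m + (j : ℕ) := by ring
      rw [hj]; generalize (j : ℕ) * m = a; omega
    · refine Finset.sum_congr rfl fun j _ => ?_
      apply sgn_smul_congr
      have hj : (j : ℕ) * (m + 1) = (j : ℕ) * m + (j : ℕ) := by ring
      rw [hj]; generalize (j : ℕ) * m = a; omega
  · rw [← Finset.sum_product', Finset.univ_product_univ]
    refine Finset.sum_nbij'
      (fun x : Fin (n + 1) × Fin (m + 1) =>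
        ((x.1, ⟨(x.1 : ℕ) + (x.2 : ℕ), by have := x.1.isLt; have := x.2.isLt; omega⟩) :
          Fin (n + 1) × Fin (n + m + 1)))
      (fun y : Fin (n + 1) × Fin (n + m + 1) =>
        ((y.1, ⟨min ((y.2 : ℕ) - (y.1 : ℕ)) m, by omega⟩) : Fin (n + 1) × Fin (m + 1)))
      ?_ ?_ ?_ ?_ ?_
    · intro x _
      simp only [Finset.mem_filter, Finset.mem_univ, true_and]
      have := x.2.isLt; omega
    · intro y _; exact Finset.mem_univ _
    · intro x _
      have := x.2.isLt
      ext <;> simp <;> omega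
    · intro y hy
      simp only [Finset.mem_filter, Finset.mem_univ, true_and] at hy
      ext <;> simp <;> omega
    · intro x _
      dsimp only
      apply sgn_smul_congr
      have hj : (x.1 : ℕ) * (m + 1) = (x.1 : ℕ) * m + (x.1 : ℕ) := by ring
      rw [hj]; generalize (x.1 : ℕ) * m = a; omega


lemma L3 :
    ((-1 : k) ^ (m + 1)) • tr (show n + m + 1 = m + n + 1 by omega)
        (O.delta π (O.iota f g)) =
      - (∑ j : Fin (n + 1), ((-1 : k) ^ ((j : ℕ) * m + n)) • PP0 O π f g j)
        - (∑ j : Fin (n + 1), ((-1 : k) ^ ((j : ℕ) * m + m)) • PP1 O π f g j)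
        + ∑ x : Fin (n + 1) × Fin (n + m + 1),
            ((-1 : k) ^ (m + (x.1 : ℕ) * m + (x.2 : ℕ))) • EE O π f g x.1 x.2 := by
  rw [delta_expand]
  unfold iota PP0 PP1 EE
  simp only [O.comp_sum_right, O.comp_sum_left, O.comp_smul_right, O.comp_smul_left,
    tr_sub, tr_add, tr_smul, tr_sum, tr_comp]
  rw [Fintype.sum_prod_type]
  simp only [smul_sub, smul_add, Finset.smul_sum, smul_smul, ← pow_add]
  rw [Finset.sum_comm]
  have h1 : ∀ j : Fin (n + 1),
      ((-1 : k) ^ (m + 1 + (n + m + (j : ℕ) * m))) •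
          O.comp ((rfl : 1 + (n + m) = 1 + (n + m)).trans (by omega)) π 0 (O.comp rfl g j f)
        = -(((-1 : k) ^ ((j : ℕ) * m + n)) •
            O.comp (show 1 + (n + m) = m + n + 1 by omega) π 0 (O.comp rfl g j f)) := by
    intro j
    rw [neg_sgn_smul]
    exact sgn_smul_congr (by generalize (j : ℕ) * m = a; omega) _
  have h2 : ∀ j : Fin (n + 1),
      ((-1 : k) ^ (m + 1 + (j : ℕ) * m)) •
          O.comp ((rfl : 1 + (n + m) = 1 + (n + m)).trans (by omega)) π 1 (O.comp rfl g j f)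
        = -(((-1 : k) ^ ((j : ℕ) * m + m)) •
            O.comp (show 1 + (n + m) = m + n + 1 by omega) π 1 (O.comp rfl g j f)) := by
    intro j
    rw [neg_sgn_smul]
    exact sgn_smul_congr (by generalize (j : ℕ) * m = a; omega) _
  have h3 : ∀ (j : Fin (n + 1)) (l : Fin (n + m + 1)),
      ((-1 : k) ^ (m + 1 + ((l : ℕ) + (j : ℕ) * m))) •
          O.comp ((rfl : n + m + 1 = n + m + 1).trans (by omega)) (O.comp rfl g j f) l π
        = -(((-1 : k) ^ (m + (j : ℕ) * m + (l : ℕ))) •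
            O.comp (show n + m + 1 = m + n + 1 by omega) (O.comp rfl g j f) l π) := by
    intro j l
    rw [neg_sgn_smul]
    exact sgn_smul_congr (by generalize (j : ℕ) * m = a; omega) _
  simp only [h1, h2, h3, Finset.sum_neg_distrib]
  abel

lemma comp_cast_left {a a' b p : ℕ} (h : a = a') (H : a + b = p) (H' : a' + b = p)
    (x : Q a) (i : Fin (a + 1)) (i' : Fin (a' + 1)) (hi : (i : ℕ) = (i' : ℕ)) (y : Q b) :
    O.comp H x i y = O.comp H' (tr h x) i' y := by
  subst h
  obtain rfl : i = i' := Fin.ext hi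
  rfl

lemma iota_zero_left {m n : ℕ} (x : Q n) : O.iota x (0 : Q m) = 0 := by
  unfold iota
  simp [O.comp_zero_left]

lemma iota_zero_right {m n : ℕ} (x : Q m) : O.iota (0 : Q n) x = 0 := by
  unfold iota
  simp [O.comp_zero_right]

lemma delta_smul (π : Q 1) {n : ℕ} (a : k) (x : Q n) :
    O.delta π (a • x) = a • O.delta π x := by
  have h1 : O.iota π (a • x) = a • O.iota π x := by
    unfold iota; rw [Finset.smul_sum]
    exact Finset.sum_congr rfl fun i _ => by rw [O.comp_smul_left, smul_comm]
  have h2 : O.iota (a • x) π = a • O.iota x π := by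
    unfold iota; rw [Finset.smul_sum]
    exact Finset.sum_congr rfl fun i _ => by rw [O.comp_smul_right, smul_comm]
  unfold delta gv
  rw [h1, h2, tr_smul, smul_comm _ a, ← smul_sub, tr_smul, ← smul_neg]

lemma delta_tr (π : Q 1) {a b : ℕ} (e : a = b) (x : Q a) :
    O.delta π (tr e x) = tr (show a + 1 = b + 1 by omega) (O.delta π x) := by
  subst e; rfl

lemma partitionE (π : Q 1) {m n : ℕ} (f : Q m) (g : Q n) :
    (∑ x : Fin (n + 1) × Fin (n + m + 1),
        ((-1 : k) ^ (m + (x.1 : ℕ) * m + (x.2 : ℕ))) • EE O π f g x.1 x.2)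
      = (∑ x ∈ Finset.univ.filter
            (fun x : Fin (n + 1) × Fin (n + m + 1) => ((x.2 : ℕ) < (x.1 : ℕ))),
          ((-1 : k) ^ (m + (x.1 : ℕ) * m + (x.2 : ℕ))) • EE O π f g x.1 x.2)
        + (∑ x ∈ Finset.univ.filter
            (fun x : Fin (n + 1) × Fin (n + m + 1) =>
              ((x.1 : ℕ) ≤ (x.2 : ℕ) ∧ (x.2 : ℕ) ≤ (x.1 : ℕ) + m)),
          ((-1 : k) ^ (m + (x.1 : ℕ) * m + (x.2 : ℕ))) • EE O π f g x.1 x.2)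
        + (∑ x ∈ Finset.univ.filter
            (fun x : Fin (n + 1) × Fin (n + m + 1) => ((x.1 : ℕ) + m < (x.2 : ℕ))),
          ((-1 : k) ^ (m + (x.1 : ℕ) * m + (x.2 : ℕ))) • EE O π f g x.1 x.2) := by
  rw [← Finset.sum_filter_add_sum_filter_not Finset.univ
    (fun x : Fin (n + 1) × Fin (n + m + 1) => ((x.2 : ℕ) < (x.1 : ℕ)))]
  rw [← Finset.sum_filter_add_sum_filter_not
    (Finset.univ.filter
      (fun x : Fin (n + 1) × Fin (n + m + 1) => ¬((x.2 : ℕ) < (x.1 : ℕ))))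
    (fun x => (x.2 : ℕ) ≤ (x.1 : ℕ) + m)]
  rw [← add_assoc]
  congr 1
  · congr 1
    apply Finset.sum_congr _ (fun _ _ => rfl)
    rw [Finset.filter_filter]
    exact Finset.filter_congr fun x _ => by constructor <;> intro h <;> omega
  · apply Finset.sum_congr _ (fun _ _ => rfl)
    rw [Finset.filter_filter]
    exact Finset.filter_congr fun x _ => by constructor <;> intro h <;> omega

end GerstenhaberAux

end NSOperad

open NSOperad

theorem cup_bracket_via_delta_and_cohomology_comm {k : Type*} [Field k] {Q : ℕ → Type*}
    [∀ n, AddCommGroup (Q n)] [∀ n, Module k (Q n)] (O : NSOperad k Q)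
    (π : Q 1) (hπ : O.IsMult π) {m n : ℕ} (f : Q m) (g : Q n) :
    (O.cupBracket π f g =
      tr (by omega : n + 1 + m = m + n + 1) (O.iota f (O.delta π g)) +
        ((-1 : k) ^ m) • tr (by omega : n + (m + 1) = m + n + 1) (O.iota (O.delta π f) g) +
        ((-1 : k) ^ (m + 1)) •
          tr (by omega : n + m + 1 = m + n + 1) (O.delta π (O.iota f g))) ∧
    (O.delta π f = 0 → O.delta π g = 0 →
      ∃ h : Q (m + n), O.delta π h = O.cupBracket π f g) := by
  have hcup1 : O.cup π f g = KK O π f g := by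
    unfold cup KK
    rw [(O.tr_comp rfl (show 1 + n = n + 1 by omega) π 1 g).symm]
    exact O.comp_cast_left (show 1 + n = n + 1 by omega) _ _ _ 0 0 (by simp) f
  have hcup2 : tr (show n + m + 1 = m + n + 1 by omega) (O.cup π g f) = KK' O π f g := by
    unfold cup KK'
    rw [O.tr_comp]
    rw [(O.tr_comp rfl (show 1 + m = m + 1 by omega) π 1 f).symm]
    exact O.comp_cast_left (show 1 + m = m + 1 by omega) _ _ _ 0 0 (by simp) g
  have main : O.cupBracket π f g =
      tr (by omega : n + 1 + m = m + n + 1) (O.iota f (O.delta π g)) +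
        ((-1 : k) ^ m) • tr (by omega : n + (m + 1) = m + n + 1) (O.iota (O.delta π f) g) +
        ((-1 : k) ^ (m + 1)) •
          tr (by omega : n + m + 1 = m + n + 1) (O.delta π (O.iota f g)) := by
    rw [L1 O π f g, L2 O π f g, L3 O π f g, partitionE O π f g]
    unfold cupBracket
    rw [hcup1, hcup2]
    have hsgn : -(((-1 : k) ^ ((m + 1) * (n + 1))) • KK' O π f g)
        = ((-1 : k) ^ (n * m + m + n)) • KK' O π f g := by
      rw [neg_sgn_smul]
      apply sgn_smul_congr
      have : (m + 1) * (n + 1) = n * m + m + n + 1 := by ring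
      rw [this]
      generalize n * m = a; omega
    rw [sub_eq_add_neg, hsgn]
    abel
  refine ⟨main, fun hf hg => ?_⟩
  refine ⟨((-1 : k) ^ (m + 1)) • tr (show n + m = m + n by omega) (O.iota f g), ?_⟩
  rw [O.delta_smul, O.delta_tr, main, hf, hg, O.iota_zero_left, O.iota_zero_right,
    tr_zero, tr_zero, smul_zero, zero_add, zero_add]
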